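/- For all real x, |exp(x - x²/2) - 1 - x| ≤ x²/2. -/

import Mathlib

open Real

private lemma hasDerivA (t : ℝ) :
    HasDerivAt (fun t : ℝ => 1 + t - Real.exp (t - t ^ 2 / 2))
      (1 - (1 - t) * Real.exp (t - t ^ 2 / 2)) t := by
  have h1 : HasDerivAt (fun t : ℝ => t - t ^ 2 / 2) (1 - t) t := by
    have := ((hasDerivAt_id t).sub (((hasDerivAt_pow 2 t)).div_const 2))
    exact this.congr_deriv (by norm_num)
  have h2 : HasDerivAt (fun t : ℝ => Real.exp (t - t ^ 2 / 2))
      (Real.exp (t - t ^ 2 / 2) * (1 - t)) t := h1.exp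
  have h3 : HasDerivAt (fun t : ℝ => 1 + t) 1 t := by
    simpa using (hasDerivAt_id t).const_add 1
  have := h3.sub h2
  convert this using 1
  exacts [rfl, rfl, rfl, by ring]

private lemma lemA {x : ℝ} (hx : 0 ≤ x) : Real.exp (x - x ^ 2 / 2) ≤ 1 + x := by
  set f : ℝ → ℝ := fun t => 1 + t - Real.exp (t - t ^ 2 / 2) with hf
  have hmono : Monotone f := by
    apply monotone_of_deriv_nonneg
    · exact fun t => (hasDerivA t).differentiableAt
    · intro t
      rw [(hasDerivA t).deriv]
      have h1 : (1 - t) * Real.exp (t - t ^ 2 / 2) ≤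
          Real.exp (-t) * Real.exp (t - t ^ 2 / 2) := by
        apply mul_le_mul_of_nonneg_right _ (Real.exp_pos _).le
        linarith [Real.add_one_le_exp (-t)]
      have h2 : Real.exp (-t) * Real.exp (t - t ^ 2 / 2) = Real.exp (-(t ^ 2) / 2) := by
        rw [← Real.exp_add]; ring_nf
      have h3 : Real.exp (-(t ^ 2) / 2) ≤ 1 := by
        rw [Real.exp_le_one_iff]
        nlinarith [sq_nonneg t]
      linarith
  have := hmono hx
  simp only [hf] at this
  simpa using this

private lemma lemB {x : ℝ} (hx : x ≤ 0) : Real.exp x ≤ 1 + x + x ^ 2 / 2 := by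
  set g : ℝ → ℝ := fun t => 1 + t + t ^ 2 / 2 - Real.exp t with hg
  have hderiv : ∀ t : ℝ, HasDerivAt g (1 + t - Real.exp t) t := by
    intro t
    have h1 : HasDerivAt (fun t : ℝ => 1 + t + t ^ 2 / 2) (1 + t) t := by
      have := (((hasDerivAt_id t).const_add 1).add ((hasDerivAt_pow 2 t).div_const 2))
      convert this using 1
      exacts [rfl, rfl, rfl, by norm_num]
    have := h1.sub (Real.hasDerivAt_exp t)
    exact this
  have hanti : Antitone g := by
    apply antitone_of_deriv_nonpos
    · exact fun t => (hderiv t).differentiableAt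
    · intro t
      rw [(hderiv t).deriv]
      linarith [Real.add_one_le_exp t]
  have := hanti hx
  simp only [hg] at this
  simp at this
  linarith

theorem abs_exp_sub_le (x : ℝ) :
    |Real.exp (x - x ^ 2 / 2) - 1 - x| ≤ x ^ 2 / 2 := by
  rw [abs_le]
  constructor
  · linarith [Real.add_one_le_exp (x - x ^ 2 / 2)]
  · rcases le_or_gt 0 x with hx | hx
    · have := lemA hx
      nlinarith [sq_nonneg x]
    · have h1 : Real.exp (x - x ^ 2 / 2) ≤ Real.exp x := by
        apply Real.exp_le_exp.mpr
        nlinarith [sq_nonneg x]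
      have := lemB hx.le
      linarith
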